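/- arXiv:1102.3932 — 2 statements merged into one kernel-verified Lean document; each statement's English description precedes it below -/
import Mathlib

section
/- The infinite word 001001·t̄ is overlap-free, and it is the lexicographically least infinite binary overlap-free word: for every infinite binary overlap-free word x, either x = 001001·t̄ or 001001·t̄ precedes x in the lexicographic order on infinite binary words (with 0 < 1). -/
/-- An overlap: a word of the form a x a x a, with `a` a single letter. -/
def Overlap (w : List (Fin 2)) : Prop :=
  ∃ (a : Fin 2) (x : List (Fin 2)), w = [a] ++ x ++ [a] ++ x ++ [a]

/-- `w` occurs as a (contiguous) factor of the infinite word `x`. -/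
def FactorOf (w : List (Fin 2)) (x : ℕ → Fin 2) : Prop :=
  ∃ i, w = (List.range w.length).map (fun j => x (i + j))

/-- An infinite binary word is overlap-free if no finite factor is an overlap. -/
def OverlapFree (x : ℕ → Fin 2) : Prop :=
  ∀ w, FactorOf w x → ¬ Overlap w

/-- The Thue–Morse morphism applied to an infinite word. -/
def mu (x : ℕ → Fin 2) : ℕ → Fin 2 :=
  fun n => if n % 2 = 0 then x (n / 2) else 1 - x (n / 2)

/-- Prepend a finite word to an infinite word. -/
def prepend (p : List (Fin 2)) (w : ℕ → Fin 2) : ℕ → Fin 2 :=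
  fun n => if h : n < p.length then p.get ⟨n, h⟩ else w (n - p.length)

/-- `x` begins with the finite word `p`. -/
def BeginsWith (x : ℕ → Fin 2) (p : List (Fin 2)) : Prop :=
  ∀ i < p.length, x i = p.getD i 0

/-- The Thue--Morse word: the parity of the number of 1s in the binary expansion. -/
def thueMorse : ℕ → Fin 2 := fun n => Fin.ofNat 2 ((Nat.digits 2 n).count 1)

/-- Lexicographic order (with 0 < 1) on infinite binary words. -/
def LexLt (u v : ℕ → Fin 2) : Prop :=
  ∃ n, (∀ i < n, u i = v i) ∧ u n = 0 ∧ v n = 1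


def tc : ℕ → Fin 2 := fun n => 1 - thueMorse n

lemma tm_zero : thueMorse 0 = 0 := by simp [thueMorse]

lemma tm_even (n : ℕ) : thueMorse (2*n) = thueMorse n := by
  rcases Nat.eq_zero_or_pos n with h | h
  · simp [h]
  · unfold thueMorse
    rw [Nat.digits_def' (by norm_num : 1 < 2) (by omega)]
    simp [Nat.mul_div_cancel_left, List.count_cons]

lemma tm_odd (n : ℕ) : thueMorse (2*n+1) = 1 + thueMorse n := by
  unfold thueMorse
  rw [Nat.digits_def' (by norm_num : 1 < 2) (by omega)]
  have h1 : (2*n+1) % 2 = 1 := by omega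
  have h2 : (2*n+1) / 2 = n := by omega
  rw [h1, h2, List.count_cons]
  simp
  push_cast
  apply Fin.ext; simp [Fin.val_add]; omega

lemma tc_even (n : ℕ) : tc (2*n) = tc n := by unfold tc; rw [tm_even]

lemma tc_odd (n : ℕ) : tc (2*n+1) = 1 - tc n := by
  unfold tc
  rw [tm_odd]
  revert n
  intro n
  generalize thueMorse n = a
  revert a; decide

lemma tcv0 : tc 0 = 1 := by unfold tc; rw [tm_zero]; rfl
lemma tcv1 : tc 1 = 0 := by have h := tc_odd 0; rw [show 2*0+1 = 1 from rfl] at h; rw [h, tcv0]; rfl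
lemma tcv2 : tc 2 = 0 := by have h := tc_even 1; rw [show 2*1 = 2 from rfl] at h; rw [h]; exact tcv1
lemma tcv3 : tc 3 = 1 := by have h := tc_odd 1; rw [show 2*1+1 = 3 from rfl] at h; rw [h, tcv1]; rfl
lemma tcv4 : tc 4 = 0 := by have h := tc_even 2; rw [show 2*2 = 4 from rfl] at h; rw [h]; exact tcv2
lemma tcv5 : tc 5 = 1 := by have h := tc_odd 2; rw [show 2*2+1 = 5 from rfl] at h; rw [h, tcv2]; rfl
lemma tcv6 : tc 6 = 1 := by have h := tc_even 3; rw [show 2*3 = 6 from rfl] at h; rw [h]; exact tcv3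
lemma tcv7 : tc 7 = 0 := by have h := tc_odd 3; rw [show 2*3+1 = 7 from rfl] at h; rw [h, tcv3]; rfl
lemma tcv8 : tc 8 = 0 := by have h := tc_even 4; rw [show 2*4 = 8 from rfl] at h; rw [h]; exact tcv4
lemma tcv9 : tc 9 = 1 := by have h := tc_odd 4; rw [show 2*4+1 = 9 from rfl] at h; rw [h, tcv4]; rfl
lemma tcv10 : tc 10 = 1 := by have h := tc_even 5; rw [show 2*5 = 10 from rfl] at h; rw [h]; exact tcv5
lemma tcv11 : tc 11 = 0 := by have h := tc_odd 5; rw [show 2*5+1 = 11 from rfl] at h; rw [h, tcv5]; rfl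
lemma tcv12 : tc 12 = 1 := by have h := tc_even 6; rw [show 2*6 = 12 from rfl] at h; rw [h]; exact tcv6
lemma tcv13 : tc 13 = 0 := by have h := tc_odd 6; rw [show 2*6+1 = 13 from rfl] at h; rw [h, tcv6]; rfl
lemma tcv14 : tc 14 = 0 := by have h := tc_even 7; rw [show 2*7 = 14 from rfl] at h; rw [h]; exact tcv7
lemma tcv15 : tc 15 = 1 := by have h := tc_odd 7; rw [show 2*7+1 = 15 from rfl] at h; rw [h, tcv7]; rfl
lemma tcv16 : tc 16 = 0 := by have h := tc_even 8; rw [show 2*8 = 16 from rfl] at h; rw [h]; exact tcv8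
lemma tcv17 : tc 17 = 1 := by have h := tc_odd 8; rw [show 2*8+1 = 17 from rfl] at h; rw [h, tcv8]; rfl
lemma tcv18 : tc 18 = 1 := by have h := tc_even 9; rw [show 2*9 = 18 from rfl] at h; rw [h]; exact tcv9
lemma tcv19 : tc 19 = 0 := by have h := tc_odd 9; rw [show 2*9+1 = 19 from rfl] at h; rw [h, tcv9]; rfl
lemma tcv20 : tc 20 = 1 := by have h := tc_even 10; rw [show 2*10 = 20 from rfl] at h; rw [h]; exact tcv10
lemma tcv21 : tc 21 = 0 := by have h := tc_odd 10; rw [show 2*10+1 = 21 from rfl] at h; rw [h, tcv10]; rfl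
lemma tcv22 : tc 22 = 0 := by have h := tc_even 11; rw [show 2*11 = 22 from rfl] at h; rw [h]; exact tcv11
lemma tcv23 : tc 23 = 1 := by have h := tc_odd 11; rw [show 2*11+1 = 23 from rfl] at h; rw [h, tcv11]; rfl
lemma tcv24 : tc 24 = 1 := by have h := tc_even 12; rw [show 2*12 = 24 from rfl] at h; rw [h]; exact tcv12
lemma tcv25 : tc 25 = 0 := by have h := tc_odd 12; rw [show 2*12+1 = 25 from rfl] at h; rw [h, tcv12]; rfl
lemma tcv26 : tc 26 = 0 := by have h := tc_even 13; rw [show 2*13 = 26 from rfl] at h; rw [h]; exact tcv13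
lemma tcv27 : tc 27 = 1 := by have h := tc_odd 13; rw [show 2*13+1 = 27 from rfl] at h; rw [h, tcv13]; rfl
lemma tcv28 : tc 28 = 0 := by have h := tc_even 14; rw [show 2*14 = 28 from rfl] at h; rw [h]; exact tcv14
lemma tcv29 : tc 29 = 1 := by have h := tc_odd 14; rw [show 2*14+1 = 29 from rfl] at h; rw [h, tcv14]; rfl
lemma tcv30 : tc 30 = 1 := by have h := tc_even 15; rw [show 2*15 = 30 from rfl] at h; rw [h]; exact tcv15
lemma tcv31 : tc 31 = 0 := by have h := tc_odd 15; rw [show 2*15+1 = 31 from rfl] at h; rw [h, tcv15]; rfl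
lemma tcv32 : tc 32 = 0 := by have h := tc_even 16; rw [show 2*16 = 32 from rfl] at h; rw [h]; exact tcv16
lemma tcv33 : tc 33 = 1 := by have h := tc_odd 16; rw [show 2*16+1 = 33 from rfl] at h; rw [h, tcv16]; rfl
lemma tcv34 : tc 34 = 1 := by have h := tc_even 17; rw [show 2*17 = 34 from rfl] at h; rw [h]; exact tcv17
lemma tcv35 : tc 35 = 0 := by have h := tc_odd 17; rw [show 2*17+1 = 35 from rfl] at h; rw [h, tcv17]; rfl
lemma tcv36 : tc 36 = 1 := by have h := tc_even 18; rw [show 2*18 = 36 from rfl] at h; rw [h]; exact tcv18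
lemma tcv37 : tc 37 = 0 := by have h := tc_odd 18; rw [show 2*18+1 = 37 from rfl] at h; rw [h, tcv18]; rfl
lemma tcv38 : tc 38 = 0 := by have h := tc_even 19; rw [show 2*19 = 38 from rfl] at h; rw [h]; exact tcv19
lemma tcv39 : tc 39 = 1 := by have h := tc_odd 19; rw [show 2*19+1 = 39 from rfl] at h; rw [h, tcv19]; rfl
lemma tcv40 : tc 40 = 1 := by have h := tc_even 20; rw [show 2*20 = 40 from rfl] at h; rw [h]; exact tcv20
lemma tcv41 : tc 41 = 0 := by have h := tc_odd 20; rw [show 2*20+1 = 41 from rfl] at h; rw [h, tcv20]; rfl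
lemma tcv42 : tc 42 = 0 := by have h := tc_even 21; rw [show 2*21 = 42 from rfl] at h; rw [h]; exact tcv21
lemma tcv43 : tc 43 = 1 := by have h := tc_odd 21; rw [show 2*21+1 = 43 from rfl] at h; rw [h, tcv21]; rfl
lemma tcv44 : tc 44 = 0 := by have h := tc_even 22; rw [show 2*22 = 44 from rfl] at h; rw [h]; exact tcv22
lemma tcv45 : tc 45 = 1 := by have h := tc_odd 22; rw [show 2*22+1 = 45 from rfl] at h; rw [h, tcv22]; rfl
lemma tcv46 : tc 46 = 1 := by have h := tc_even 23; rw [show 2*23 = 46 from rfl] at h; rw [h]; exact tcv23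
lemma tcv47 : tc 47 = 0 := by have h := tc_odd 23; rw [show 2*23+1 = 47 from rfl] at h; rw [h, tcv23]; rfl

def Per (x : ℕ → Fin 2) (i p : ℕ) : Prop := ∀ j, i ≤ j → j ≤ i + p → x j = x (j + p)

def OFp (x : ℕ → Fin 2) : Prop := ∀ i p, 1 ≤ p → ¬ Per x i p

lemma f2_ne (a b : Fin 2) (h : a ≠ b) : b = 1 - a := by revert a b; decide
lemma f2_sub_ne (a : Fin 2) : 1 - a ≠ a := by revert a; decide
lemma f2_cases (a : Fin 2) : a = 0 ∨ a = 1 := by revert a; decide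
lemma f2_trans (a b c : Fin 2) (h1 : a ≠ b) (h2 : b ≠ c) : a = c := by revert a b c; decide

lemma ofp_of_overlapFree {x : ℕ → Fin 2} (h : OverlapFree x) : OFp x := by
  intro i p hp HP
  set Y : List (Fin 2) := (List.range p).map (fun j => x (i+1+j)) with hY
  have hYlen : Y.length = p := by simp [hY]
  set w : List (Fin 2) := x i :: (Y ++ Y) with hw
  have hwlen : w.length = 1 + (p + p) := by simp [hw, hYlen]; omega
  have hfac : FactorOf w x := by
    refine ⟨i, ?_⟩
    apply List.ext_getElem
    · simp [hwlen]
    · intro n h1 h2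
      simp only [List.getElem_map, List.getElem_range]
      rcases n with _ | m
      · simp [hw]
      · have hm : m < p + p := by
          have := h1; rw [hwlen] at this; omega
        simp only [hw, List.getElem_cons_succ]
        by_cases hc : m < p
        · rw [List.getElem_append_left (by omega : m < Y.length)]
          simp only [hY, List.getElem_map, List.getElem_range]
          congr 1; omega
        · rw [List.getElem_append_right (by omega : Y.length ≤ m)]
          have hlt : m - Y.length < Y.length := by omega
          simp only [hY, List.getElem_map, List.getElem_range]
          have := HP (i + 1 + (m - p)) (by omega) (by omega)
          rw [hYlen]
          calc x (i+1+(m-p)) = x (i+1+(m-p)+p) := this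
            _ = x (i + (m+1)) := by congr 1; omega
  have hov : Overlap w := by
    refine ⟨x i, (List.range (p-1)).map (fun j => x (i+1+j)), ?_⟩
    have hY2 : Y = ((List.range (p-1)).map (fun j => x (i+1+j))) ++ [x i] := by
      rw [hY, show p = (p-1)+1 by omega, List.range_succ, List.map_append]
      congr 1
      simp only [List.map_cons, List.map_nil]
      congr 1
      have := HP i (le_refl i) (by omega)
      rw [show i+1+(p-1) = i + p by omega]
      exact this.symm
    rw [hw, hY2]
    simp [List.append_assoc]
  exact h w hfac hov

lemma per_of_factor_overlap {w : List (Fin 2)} {x : ℕ → Fin 2}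
    (hf : FactorOf w x) (ho : Overlap w) : ∃ i q, 1 ≤ q ∧ Per x i q := by
  obtain ⟨i, hfac⟩ := hf
  obtain ⟨a, X, hform⟩ := ho
  set q := X.length + 1 with hq
  have hwlen : w.length = 2*q + 1 := by rw [hform]; simp [hq]; omega
  set Y : List (Fin 2) := X ++ [a] with hY
  have hYlen : Y.length = q := by simp [hY, hq]
  have hform2 : w = a :: (Y ++ Y) := by rw [hform]; simp [hY, List.append_assoc]
  have hx : ∀ n, n < w.length → x (i + n) = w.getD n 0 := by
    intro n hn
    conv_rhs => rw [hfac]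
    rw [List.getD_eq_getElem _ _ (by simpa using hn)]
    simp
  have hper : ∀ m, m ≤ q → w.getD m 0 = w.getD (m + q) 0 := by
    intro m hm
    rw [hform2]
    rcases Nat.eq_zero_or_pos m with h0 | h0
    · subst h0
      rw [List.getD_cons_zero]
      rw [show 0 + q = (q-1) + 1 by omega, List.getD_cons_succ]
      rw [List.getD_append Y Y 0 (q-1) (by omega)]
      rw [hY, List.getD_append_right X [a] 0 (q-1) (by omega)]
      rw [show q - 1 - X.length = 0 from by omega]
      simp
    · rw [show m = (m-1)+1 by omega, List.getD_cons_succ,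
        show (m-1)+1+q = (m-1+q)+1 by omega, List.getD_cons_succ]
      rw [List.getD_append Y Y 0 (m-1) (by omega)]
      rw [List.getD_append_right Y Y 0 (m-1+q) (by omega)]
      congr 1
      omega
  refine ⟨i, q, by omega, ?_⟩
  intro j h1 h2
  have e1 : x j = x (i + (j - i)) := by congr 1; omega
  have e2 : x (j + q) = x (i + ((j-i) + q)) := by congr 1; omega
  rw [e1, e2, hx _ (by omega), hx _ (by omega)]
  exact hper (j - i) (by omega)

lemma f2_sub_inj (a b : Fin 2) (h : 1 - a = 1 - b) : a = b := by revert a b; decide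
lemma f2_dd (a : Fin 2) : 1 - (1 - a) = a := by revert a; decide

lemma tc_even_pair (k : ℕ) : tc (2*k) ≠ tc (2*k+1) := by
  rw [tc_odd, tc_even]; exact fun h => (f2_sub_ne (tc k)) h.symm

lemma tc_nopair_even (j : ℕ) (h : j % 2 = 0) : tc j ≠ tc (j+1) := by
  have := tc_even_pair (j/2)
  rwa [show 2*(j/2) = j by omega] at this

lemma ofp_tc : OFp tc := by
  suffices H : ∀ p, 1 ≤ p → ∀ i, ¬ Per tc i p by intro i p hp; exact H p hp i
  intro p
  induction p using Nat.strong_induction_on with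
  | _ p IH =>
    intro hp i HP
    rcases Nat.even_or_odd p with ⟨q, hq⟩ | ⟨q, hq⟩
    · have hq1 : 1 ≤ q := by omega
      refine IH q (by omega) hq1 (i/2) ?_
      intro k h1 h2
      by_cases hc : i ≤ 2*k
      · have h := HP (2*k) hc (by omega)
        rw [show 2*k + p = 2*(k+q) by omega] at h
        rwa [tc_even, tc_even] at h
      · have h := HP (2*k+1) (by omega) (by omega)
        rw [show 2*k+1 + p = 2*(k+q)+1 by omega] at h
        rw [tc_odd, tc_odd] at h
        exact f2_sub_inj _ _ h
    · have nopair : ∀ j, i ≤ j → j + 1 ≤ i + p → tc j ≠ tc (j+1) := by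
        intro j h1 h2 heq
        have e1 := HP j h1 (by omega)
        have e2 := HP (j+1) (by omega) h2
        have hpair2 : tc (j+p) = tc (j+p+1) := by
          rw [← e1, show j+p+1 = j+1+p by omega, ← e2]; exact heq
        rcases Nat.even_or_odd j with ⟨r, hr⟩ | ⟨r, hr⟩
        · exact tc_nopair_even j (by omega) heq
        · exact tc_nopair_even (j+p) (by omega) hpair2
      have alt : ∀ m, m ≤ p → tc (i+m) = (if m % 2 = 0 then tc i else 1 - tc i) := by
        intro m
        induction m with
        | zero => simp
        | succ k ihk =>
          intro hk
          have h1 := ihk (by omega)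
          have hne := nopair (i+k) (by omega) (by omega)
          have h2 := f2_ne _ _ hne
          rw [show i + (k+1) = i + k + 1 by omega, h2, h1]
          rcases Nat.even_or_odd k with ⟨r, hr⟩ | ⟨r, hr⟩
          · rw [if_pos (show k % 2 = 0 by omega), if_neg (show ¬((k+1) % 2 = 0) by omega)]
          · rw [if_neg (show ¬(k % 2 = 0) by omega), if_pos (show (k+1) % 2 = 0 by omega), f2_dd]
      have h1 := alt p (le_refl p)
      rw [if_neg (show ¬(p % 2 = 0) by omega)] at h1
      have h2 := HP i (le_refl i) (by omega)
      exact f2_sub_ne (tc i) (h2.trans h1).symm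

lemma tc_odd_period (p L : ℕ) (hp : p % 2 = 1) (hL : 2 ≤ L)
    (H : ∀ m, m ≤ L → tc m = tc (m+p)) : False := by
  have e1 := H 1 (by omega)
  have e2 := H 2 (by omega)
  have hpair := tc_nopair_even (1+p) (by omega)
  rw [show 1+p+1 = 2+p by omega, ← e1, ← e2] at hpair
  rw [tcv1, tcv2] at hpair
  exact hpair rfl

lemma D0 : ∀ p, 1 ≤ p → ¬ (∀ m, m + 1 ≤ p → tc m = tc (m+p)) := by
  intro p
  induction p using Nat.strong_induction_on with
  | _ p IH =>
    intro hp H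
    rcases Nat.even_or_odd p with ⟨q, hq⟩ | ⟨k2, hk2⟩
    · have hq1 : 1 ≤ q := by omega
      refine IH q (by omega) hq1 ?_
      intro m hm
      have h := H (2*m) (by omega)
      rw [show 2*m + p = 2*(m+q) by omega, tc_even, tc_even] at h
      exact h
    · rcases Nat.lt_or_ge p 3 with hc | hc
      · have h := H 0 (by omega)
        have hp1 : p = 1 := by omega
        rw [hp1, tcv0] at h
        rw [tcv1] at h
        exact absurd h (by decide)
      · exact tc_odd_period p (p-1) (by omega) (by omega) (fun m hm => H m (by omega))

lemma D1 : ∀ p, 4 ≤ p → ¬ (∀ m, m + 2 ≤ p → tc m = tc (m+p)) := by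
  intro p hp H
  rcases Nat.even_or_odd p with ⟨q, hq⟩ | ⟨k2, hk2⟩
  · refine D0 q (by omega) ?_
    intro m hm
    have h := H (2*m) (by omega)
    rw [show 2*m + p = 2*(m+q) by omega, tc_even, tc_even] at h
    exact h
  · exact tc_odd_period p (p-2) (by omega) (by omega) (fun m hm => H m (by omega))

lemma D2 : ∀ p, 7 ≤ p → ¬ (∀ m, m + 3 ≤ p → tc m = tc (m+p)) := by
  intro p hp H
  rcases Nat.even_or_odd p with ⟨q, hq⟩ | ⟨k2, hk2⟩
  · refine D1 q (by omega) ?_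
    intro m hm
    have h := H (2*m) (by omega)
    rw [show 2*m + p = 2*(m+q) by omega, tc_even, tc_even] at h
    exact h
  · exact tc_odd_period p (p-3) (by omega) (by omega) (fun m hm => H m (by omega))

lemma D3 : ∀ p, 7 ≤ p → ¬ (∀ m, m + 4 ≤ p → tc m = tc (m+p)) := by
  intro p hp H
  rcases Nat.even_or_odd p with ⟨q, hq⟩ | ⟨k2, hk2⟩
  · refine D1 q (by omega) ?_
    intro m hm
    have h := H (2*m) (by omega)
    rw [show 2*m + p = 2*(m+q) by omega, tc_even, tc_even] at h
    exact h
  · exact tc_odd_period p (p-4) (by omega) (by omega) (fun m hm => H m (by omega))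

lemma D4 : ∀ p, 13 ≤ p → ¬ (∀ m, m + 5 ≤ p → tc m = tc (m+p)) := by
  intro p hp H
  rcases Nat.even_or_odd p with ⟨q, hq⟩ | ⟨k2, hk2⟩
  · refine D2 q (by omega) ?_
    intro m hm
    have h := H (2*m) (by omega)
    rw [show 2*m + p = 2*(m+q) by omega, tc_even, tc_even] at h
    exact h
  · exact tc_odd_period p (p-5) (by omega) (by omega) (fun m hm => H m (by omega))

lemma D5 : ∀ p, 13 ≤ p → ¬ (∀ m, m + 6 ≤ p → tc m = tc (m+p)) := by
  intro p hp H
  rcases Nat.even_or_odd p with ⟨q, hq⟩ | ⟨k2, hk2⟩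
  · refine D2 q (by omega) ?_
    intro m hm
    have h := H (2*m) (by omega)
    rw [show 2*m + p = 2*(m+q) by omega, tc_even, tc_even] at h
    exact h
  · exact tc_odd_period p (p-6) (by omega) (by omega) (fun m hm => H m (by omega))
def uu : ℕ → Fin 2 := prepend [0, 0, 1, 0, 0, 1] tc

lemma uu_ge6 : ∀ n, 6 ≤ n → uu n = tc (n - 6) := by
  intro n h
  unfold uu prepend
  rw [dif_neg (by simp; omega)]
  norm_num

lemma uuv0 : uu 0 = 0 := rfl
lemma uuv1 : uu 1 = 0 := rfl
lemma uuv2 : uu 2 = 1 := rfl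
lemma uuv3 : uu 3 = 0 := rfl
lemma uuv4 : uu 4 = 0 := rfl
lemma uuv5 : uu 5 = 1 := rfl
lemma uuv6 : uu 6 = 1 := by rw [uu_ge6 6 (by omega)]; exact tcv0
lemma uuv7 : uu 7 = 0 := by rw [uu_ge6 7 (by omega)]; exact tcv1
lemma uuv8 : uu 8 = 0 := by rw [uu_ge6 8 (by omega)]; exact tcv2
lemma uuv9 : uu 9 = 1 := by rw [uu_ge6 9 (by omega)]; exact tcv3
lemma uuv10 : uu 10 = 0 := by rw [uu_ge6 10 (by omega)]; exact tcv4
lemma uuv11 : uu 11 = 1 := by rw [uu_ge6 11 (by omega)]; exact tcv5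
lemma uuv12 : uu 12 = 1 := by rw [uu_ge6 12 (by omega)]; exact tcv6
lemma uuv13 : uu 13 = 0 := by rw [uu_ge6 13 (by omega)]; exact tcv7
lemma uuv14 : uu 14 = 0 := by rw [uu_ge6 14 (by omega)]; exact tcv8
lemma uuv15 : uu 15 = 1 := by rw [uu_ge6 15 (by omega)]; exact tcv9
lemma uuv16 : uu 16 = 1 := by rw [uu_ge6 16 (by omega)]; exact tcv10

lemma uu_even_pair : ∀ k, 1 ≤ k → uu (2*k) ≠ uu (2*k+1) := by
  intro k hk
  match k, hk with
  | 1, _ => rw [show 2*1 = 2 from rfl, show 2*1+1 = 3 from rfl, uuv2, uuv3]; decide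
  | 2, _ => rw [show 2*2 = 4 from rfl, show 2*2+1 = 5 from rfl, uuv4, uuv5]; decide
  | (m+3), _ => 
    rw [uu_ge6 (2*(m+3)) (by omega), uu_ge6 (2*(m+3)+1) (by omega),
      show 2*(m+3) - 6 = 2*m from by omega, show 2*(m+3)+1 - 6 = 2*m+1 from by omega]
    exact tc_even_pair m

lemma ofp_uu : OFp uu := by
  intro i p hp HP
  rcases Nat.lt_or_ge i 6 with hi | hi
  swap
  · refine ofp_tc (i-6) p hp ?_
    intro j h1 h2
    have h := HP (j+6) (by omega) (by omega)
    rw [uu_ge6 (j+6) (by omega), uu_ge6 (j+6+p) (by omega),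
      show j+6-6 = j from by omega, show j+6+p-6 = j+p from by omega] at h
    exact h
  rcases Nat.even_or_odd p with ⟨q, hq⟩ | ⟨q, hq⟩
  · have HT : ∀ m, m + 6 ≤ i + p → tc m = tc (m+p) := by
      intro m hm
      have h := HP (m+6) (by omega) (by omega)
      rw [uu_ge6 (m+6) (by omega), uu_ge6 (m+6+p) (by omega),
        show m+6-6 = m from by omega, show m+6+p-6 = m+p from by omega] at h
      exact h
    interval_cases i
    · -- i = 0
      rcases Nat.lt_or_ge p 13 with hc | hc
      · have hql : 1 ≤ q := by omega
        have hqu : q ≤ 6 := by omega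
        interval_cases q
        · have hpv : p = 2 := by omega
          subst hpv
          have h := HP 0 (by omega) (by omega)
          rw [uuv0, uuv2] at h
          exact absurd h (by decide)
        · have hpv : p = 4 := by omega
          subst hpv
          have h := HP 1 (by omega) (by omega)
          rw [uuv1, uuv5] at h
          exact absurd h (by decide)
        · have hpv : p = 6 := by omega
          subst hpv
          have h := HP 0 (by omega) (by omega)
          rw [uuv0, uuv6] at h
          exact absurd h (by decide)
        · have hpv : p = 8 := by omega
          subst hpv
          have h := HP 1 (by omega) (by omega)
          rw [uuv1, uuv9] at h
          exact absurd h (by decide)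
        · have hpv : p = 10 := by omega
          subst hpv
          have h := HP 1 (by omega) (by omega)
          rw [uuv1, uuv11] at h
          exact absurd h (by decide)
        · have hpv : p = 12 := by omega
          subst hpv
          have h := HP 0 (by omega) (by omega)
          rw [uuv0, uuv12] at h
          exact absurd h (by decide)
      · exact D5 p hc (fun m hm => HT m (by omega))
    · -- i = 1
      rcases Nat.lt_or_ge p 13 with hc | hc
      · have hql : 1 ≤ q := by omega
        have hqu : q ≤ 6 := by omega
        interval_cases q
        · have hpv : p = 2 := by omega
          subst hpv
          have h := HP 2 (by omega) (by omega)
          rw [uuv2, uuv4] at h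
          exact absurd h (by decide)
        · have hpv : p = 4 := by omega
          subst hpv
          have h := HP 1 (by omega) (by omega)
          rw [uuv1, uuv5] at h
          exact absurd h (by decide)
        · have hpv : p = 6 := by omega
          subst hpv
          have h := HP 2 (by omega) (by omega)
          rw [uuv2, uuv8] at h
          exact absurd h (by decide)
        · have hpv : p = 8 := by omega
          subst hpv
          have h := HP 1 (by omega) (by omega)
          rw [uuv1, uuv9] at h
          exact absurd h (by decide)
        · have hpv : p = 10 := by omega
          subst hpv
          have h := HP 1 (by omega) (by omega)
          rw [uuv1, uuv11] at h
          exact absurd h (by decide)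
        · have hpv : p = 12 := by omega
          subst hpv
          have h := HP 2 (by omega) (by omega)
          rw [uuv2, uuv14] at h
          exact absurd h (by decide)
      · exact D4 p hc (fun m hm => HT m (by omega))
    · -- i = 2
      rcases Nat.lt_or_ge p 7 with hc | hc
      · have hql : 1 ≤ q := by omega
        have hqu : q ≤ 3 := by omega
        interval_cases q
        · have hpv : p = 2 := by omega
          subst hpv
          have h := HP 2 (by omega) (by omega)
          rw [uuv2, uuv4] at h
          exact absurd h (by decide)
        · have hpv : p = 4 := by omega
          subst hpv
          have h := HP 6 (by omega) (by omega)
          rw [uuv6, uuv10] at h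
          exact absurd h (by decide)
        · have hpv : p = 6 := by omega
          subst hpv
          have h := HP 2 (by omega) (by omega)
          rw [uuv2, uuv8] at h
          exact absurd h (by decide)
      · exact D3 p hc (fun m hm => HT m (by omega))
    · -- i = 3
      rcases Nat.lt_or_ge p 7 with hc | hc
      · have hql : 1 ≤ q := by omega
        have hqu : q ≤ 3 := by omega
        interval_cases q
        · have hpv : p = 2 := by omega
          subst hpv
          have h := HP 3 (by omega) (by omega)
          rw [uuv3, uuv5] at h
          exact absurd h (by decide)
        · have hpv : p = 4 := by omega
          subst hpv
          have h := HP 6 (by omega) (by omega)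
          rw [uuv6, uuv10] at h
          exact absurd h (by decide)
        · have hpv : p = 6 := by omega
          subst hpv
          have h := HP 3 (by omega) (by omega)
          rw [uuv3, uuv9] at h
          exact absurd h (by decide)
      · exact D3 p hc (fun m hm => HT m (by omega))
    · -- i = 4
      rcases Nat.lt_or_ge p 4 with hc | hc
      · have hql : 1 ≤ q := by omega
        have hqu : q ≤ 1 := by omega
        interval_cases q
        · have hpv : p = 2 := by omega
          subst hpv
          have h := HP 4 (by omega) (by omega)
          rw [uuv4, uuv6] at h
          exact absurd h (by decide)
      · exact D1 p hc (fun m hm => HT m (by omega))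
    · -- i = 5
      exact D0 p (by omega) (fun m hm => HT m (by omega))
  · -- p odd
    rcases Nat.lt_or_ge (i+p) 4 with hs | hs
    · have hp3 : p = 1 ∨ p = 3 := by omega
      rcases hp3 with h1 | h3
      · subst h1
        rcases Nat.lt_or_ge i 2 with h' | h'
        · have h := HP 1 (by omega) (by omega)
          rw [uuv1, uuv2] at h
          exact absurd h (by decide)
        · have h := HP 2 (by omega) (by omega)
          rw [uuv2, uuv3] at h
          exact absurd h (by decide)
      · subst h3
        have h := HP 3 (by omega) (by omega)
        rw [uuv3, uuv6] at h
        exact absurd h (by decide)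
    · rcases Nat.lt_or_ge i 4 with hi4 | hi4
      · have e1 := HP 3 (by omega) (by omega)
        have e2 := HP 4 (by omega) (by omega)
        rw [uuv3] at e1
        rw [uuv4] at e2
        have hpair := uu_even_pair ((3+p)/2) (by omega)
        rw [show 2*((3+p)/2)+1 = 4+p from by omega, show 2*((3+p)/2) = 3+p from by omega] at hpair
        rw [← e1, ← e2] at hpair
        exact hpair rfl
      · rcases Nat.lt_or_ge (i+p) 6 with hs6 | hs6
        · have h := HP 4 (by omega) (by omega)
          rw [show 4+p = 5 from by omega] at h
          rw [uuv4, uuv5] at h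
          exact absurd h (by decide)
        · have e1 := HP 5 (by omega) (by omega)
          have e2 := HP 6 (by omega) (by omega)
          rw [uuv5] at e1
          rw [uuv6] at e2
          have hpair := uu_even_pair ((5+p)/2) (by omega)
          rw [show 2*((5+p)/2)+1 = 6+p from by omega, show 2*((5+p)/2) = 5+p from by omega] at hpair
          rw [← e1, ← e2] at hpair
          exact hpair rfl
lemma pair_parity {x : ℕ → Fin 2} (hx : OFp x) :
    ∀ d : ℕ, ∀ i j : ℕ, 1 ≤ i → i ≤ j → j - i = d →
      x i = x (i+1) → x j = x (j+1) → (j - i) % 2 = 0 := by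
  intro d
  induction d using Nat.strong_induction_on with
  | _ d IH =>
    intro i j h1 hij hd pi pj
    by_cases hpar : (j - i) % 2 = 0
    · exact hpar
    · exfalso
      have hlt : i < j := by omega
      by_cases hE : ∃ k, i < k ∧ k < j ∧ x k = x (k+1)
      · obtain ⟨k, hk1, hk2, hk3⟩ := hE
        have e1 := IH (k - i) (by omega) i k (by omega) (by omega) rfl pi hk3
        have e2 := IH (j - k) (by omega) k j (by omega) (by omega) rfl hk3 pj
        omega
      · push_neg at hE
        have nopair : ∀ k, i < k → k < j → x k ≠ x (k+1) := hE
        rcases Nat.lt_or_ge (j - i) 5 with hc | hc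
        · -- j - i = 1 or 3
          rcases (show j = i + 1 ∨ j = i + 3 by omega) with rfl | rfl
          · refine hx i 1 (by omega) ?_
            intro m hm1 hm2
            rcases (show m = i ∨ m = i + 1 by omega) with rfl | rfl
            · exact pi
            · exact pj
          · -- j = i + 3
            have n1 := nopair (i+1) (by omega) (by omega)
            have n2 := nopair (i+2) (by omega) (by omega)
            have e1 : x (i+1) = x i := pi.symm
            have e2 : x (i+2) = 1 - x i := by
              have := f2_ne _ _ n1
              rw [show i+1+1 = i+2 from by omega] at this
              rw [this, e1]
            have e3 : x (i+3) = x i := by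
              have := f2_ne _ _ n2
              rw [show i+2+1 = i+3 from by omega] at this
              rw [this, e2, f2_dd]
            have e4 : x (i+4) = x i := by
              have := pj
              rw [show i+3+1 = i+4 from by omega] at this
              rw [← this, e3]
            -- x (i-1)
            have e0 : x (i-1) = 1 - x i := by
              rcases (Decidable.em (x (i-1) = x i)) with h | h
              · exfalso
                refine hx (i-1) 1 (by omega) ?_
                intro m hm1 hm2
                rcases (show m = i - 1 ∨ m = i by omega) with rfl | rfl
                · rw [show i-1+1 = i from by omega]
                  exact h
                · exact pi
              · exact f2_ne _ _ (fun hh => h hh.symm)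
            have e5 : x (i+5) = 1 - x i := by
              rcases (Decidable.em (x (i+5) = x (i+4))) with h | h
              · exfalso
                refine hx (i+3) 1 (by omega) ?_
                intro m hm1 hm2
                rcases (show m = i + 3 ∨ m = i + 4 by omega) with rfl | rfl
                · rw [show i+3+1 = i+4 from by omega, e3, e4]
                · rw [show i+4+1 = i+5 from by omega, e4, h, e4]
              · have hh := f2_ne _ _ (fun hh => h hh.symm)
                rw [show i+4+1 = i+5 from by omega] at hh
                rw [hh, e4]
            refine hx (i-1) 3 (by omega) ?_
            intro m hm1 hm2
            rcases (show m = i-1 ∨ m = i ∨ m = i+1 ∨ m = i+2 by omega) with rfl | rfl | rfl | rfl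
            · rw [show i-1+3 = i+2 from by omega, e0, e2]
            · rw [e3]
            · rw [show i+1+3 = i+4 from by omega, e1, e4]
            · rw [show i+2+3 = i+5 from by omega, e2, e5]
        · -- j - i ≥ 5 : alternation gives period 2
          refine hx (i+1) 2 (by omega) ?_
          intro m hm1 hm2
          have na := nopair m (by omega) (by omega)
          have nb := nopair (m+1) (by omega) (by omega)
          exact f2_trans _ _ _ na nb
def ww : ℕ → Fin 2 := fun n => if n = 0 then 1 else tc (n-1)
def vv : ℕ → Fin 2 := mu ww

lemma ww_odd (k : ℕ) : ww (2*k+1) = tc k := by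
  unfold ww
  rw [if_neg (by omega), show 2*k+1-1 = 2*k from by omega, tc_even]

lemma ww_even2 (k : ℕ) : ww (2*k+2) = 1 - tc k := by
  unfold ww
  rw [if_neg (by omega), show 2*k+2-1 = 2*k+1 from by omega, tc_odd]

lemma vv_even (k : ℕ) : vv (2*k) = ww k := by
  unfold vv mu
  rw [if_pos (by omega), show 2*k/2 = k from by omega]

lemma vv_odd (k : ℕ) : vv (2*k+1) = 1 - ww k := by
  unfold vv mu
  rw [if_neg (by omega), show (2*k+1)/2 = k from by omega]

lemma wwv0 : ww 0 = 1 := rfl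
lemma wwv1 : ww 1 = 1 := by unfold ww; rw [if_neg (by omega)]; exact tcv0
lemma wwv2 : ww 2 = 0 := by unfold ww; rw [if_neg (by omega)]; exact tcv1
lemma wwv3 : ww 3 = 0 := by unfold ww; rw [if_neg (by omega)]; exact tcv2
lemma wwv4 : ww 4 = 1 := by unfold ww; rw [if_neg (by omega)]; exact tcv3
lemma wwv5 : ww 5 = 0 := by unfold ww; rw [if_neg (by omega)]; exact tcv4
lemma wwv6 : ww 6 = 1 := by unfold ww; rw [if_neg (by omega)]; exact tcv5
lemma wwv7 : ww 7 = 1 := by unfold ww; rw [if_neg (by omega)]; exact tcv6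

lemma vvv0 : vv 0 = 1 := by have h := vv_even 0; rw [show 2*0 = 0 from rfl] at h; rw [h, wwv0]
lemma vvv1 : vv 1 = 0 := by have h := vv_odd 0; rw [show 2*0+1 = 1 from rfl] at h; rw [h, wwv0]; rfl
lemma vvv2 : vv 2 = 1 := by have h := vv_even 1; rw [show 2*1 = 2 from rfl] at h; rw [h, wwv1]
lemma vvv3 : vv 3 = 0 := by have h := vv_odd 1; rw [show 2*1+1 = 3 from rfl] at h; rw [h, wwv1]; rfl
lemma vvv4 : vv 4 = 0 := by have h := vv_even 2; rw [show 2*2 = 4 from rfl] at h; rw [h, wwv2]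
lemma vvv5 : vv 5 = 1 := by have h := vv_odd 2; rw [show 2*2+1 = 5 from rfl] at h; rw [h, wwv2]; rfl
lemma vvv6 : vv 6 = 0 := by have h := vv_even 3; rw [show 2*3 = 6 from rfl] at h; rw [h, wwv3]
lemma vvv7 : vv 7 = 1 := by have h := vv_odd 3; rw [show 2*3+1 = 7 from rfl] at h; rw [h, wwv3]; rfl

lemma uu_even2 (k : ℕ) : uu (2*k+2) = vv k := by
  match k with
  | 0 => rw [show 2*0+2 = 2 from rfl, uuv2, vvv0]
  | 1 => rw [show 2*1+2 = 4 from rfl, uuv4, vvv1]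
  | 2 => rw [show 2*2+2 = 6 from rfl, uuv6, vvv2]
  | (m+3) =>
    rw [uu_ge6 (2*(m+3)+2) (by omega), show 2*(m+3)+2-6 = 2*(m+1) from by omega, tc_even]
    rcases Nat.even_or_odd (m+3) with ⟨r, hr⟩ | ⟨r, hr⟩
    · -- m+3 = 2r, r ≥ 2
      rw [show m+3 = 2*r from by omega, vv_even]
      have : ww r = tc (r-1) := by unfold ww; rw [if_neg (by omega)]
      rw [this, show m+1 = 2*(r-1) from by omega, tc_even]
    · -- m+3 = 2r+1, r ≥ 1
      rw [show m+3 = 2*r+1 from by omega, vv_odd]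
      have : ww r = tc (r-1) := by unfold ww; rw [if_neg (by omega)]
      rw [this, show m+1 = 2*(r-1)+1 from by omega, tc_odd]

lemma uu_odd3 (k : ℕ) : uu (2*k+3) = 1 - uu (2*k+2) := by
  match k with
  | 0 => rw [show 2*0+3 = 3 from rfl, show 2*0+2 = 2 from rfl, uuv3, uuv2]; rfl
  | 1 => rw [show 2*1+3 = 5 from rfl, show 2*1+2 = 4 from rfl, uuv5, uuv4]; rfl
  | (m+2) =>
    rw [uu_ge6 (2*(m+2)+3) (by omega), uu_ge6 (2*(m+2)+2) (by omega),
      show 2*(m+2)+3-6 = 2*m+1 from by omega, show 2*(m+2)+2-6 = 2*m from by omega,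
      tc_odd, tc_even]
lemma ofp_sub {x : ℕ → Fin 2} (hx : OFp x) (c : ℕ)
    (hne : ∀ k, x (2*k+c) ≠ x (2*k+c+1)) : OFp (fun k => x (2*k+c)) := by
  intro i' p' hp' HP'
  refine hx (2*i'+c) (2*p') (by omega) ?_
  intro j hj1 hj2
  rcases Nat.even_or_odd (j - c) with ⟨r, hr⟩ | ⟨r, hr⟩
  · have h : x (2*r+c) = x (2*(r+p')+c) := HP' r (by omega) (by omega)
    rw [show j = 2*r+c from by omega, show 2*r+c+2*p' = 2*(r+p')+c from by omega]
    exact h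
  · have e1 := f2_ne _ _ (hne r)
    have e2 := f2_ne _ _ (hne (r+p'))
    have h : x (2*r+c) = x (2*(r+p')+c) := HP' r (by omega) (by omega)
    rw [show j = 2*r+c+1 from by omega, e1, show 2*r+c+1+2*p' = 2*(r+p')+c+1 from by omega,
      e2, h]

def Gt (n : ℕ) : Prop :=
  ∀ s : ℕ → Fin 2, OFp s → s 0 = 1 → s 1 = 0 → s 2 = 0 →
    (∀ i, i < n → s i = tc i) → s n = 0 → tc n = 1 → False

def Gw (n : ℕ) : Prop :=
  ∀ z : ℕ → Fin 2, OFp z → z 0 = 1 → z 1 = 1 → z 2 = 0 → z 3 = 0 →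
    (∀ i, i < n → z i = ww i) → z n = 0 → ww n = 1 → False

def Gv (n : ℕ) : Prop :=
  ∀ y : ℕ → Fin 2, OFp y → y 0 = 1 → y 1 = 0 → y 2 = 1 →
    (∀ i, i < n → y i = vv i) → y n = 0 → vv n = 1 → False

def Gu (n : ℕ) : Prop :=
  ∀ x : ℕ → Fin 2, OFp x → (∀ i, i < n → x i = uu i) → x n = 0 → uu n = 1 → False

lemma Gall : ∀ n : ℕ, Gt n ∧ Gw n ∧ Gv n ∧ Gu n := by
  intro n
  induction n using Nat.strong_induction_on with
  | _ n IH =>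
    refine ⟨?_, ?_, ?_, ?_⟩
    · -- Gt
      intro s hs h0 h1 h2 hag hn htc
      rcases Nat.lt_or_ge n 7 with hn7 | hn7
      · interval_cases n
        · rw [h0] at hn; exact absurd hn (by decide)
        · rw [tcv1] at htc; exact absurd htc (by decide)
        · rw [tcv2] at htc; exact absurd htc (by decide)
        · refine hs 1 1 (by omega) ?_
          intro m hm1 hm2
          rcases (show m = 1 ∨ m = 2 by omega) with rfl | rfl
          · show s 1 = s 2
            rw [h1, h2]
          · show s 2 = s 3
            rw [h2, hn]
        · rw [tcv4] at htc; exact absurd htc (by decide)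
        · -- n = 5 : pairs at 1 and 4
          have hag4 := hag 4 (by omega)
          rw [tcv4] at hag4
          have p1 : s 1 = s (1+1) := by show s 1 = s 2; rw [h1, h2]
          have p4 : s 4 = s (4+1) := by show s 4 = s 5; rw [hag4, hn]
          have := pair_parity hs 3 1 4 (by omega) (by omega) rfl p1 p4
          omega
        · -- n = 6
          have hag3 := hag 3 (by omega); rw [tcv3] at hag3
          have hag4 := hag 4 (by omega); rw [tcv4] at hag4
          have hag5 := hag 5 (by omega); rw [tcv5] at hag5
          rcases f2_cases (s 7) with h7 | h7
          · -- pair at 6 and 1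
            have p1 : s 1 = s (1+1) := by show s 1 = s 2; rw [h1, h2]
            have p6 : s 6 = s (6+1) := by show s 6 = s 7; rw [hn, h7]
            have := pair_parity hs 5 1 6 (by omega) (by omega) rfl p1 p6
            omega
          · refine hs 3 2 (by omega) ?_
            intro m hm1 hm2
            rcases (show m = 3 ∨ m = 4 ∨ m = 5 by omega) with rfl | rfl | rfl
            · show s 3 = s 5
              rw [hag3, hag5]
            · show s 4 = s 6
              rw [hag4, hn]
            · show s 5 = s 7
              rw [hag5, h7]
      · -- n ≥ 7 : parse
        have hag3 := hag 3 (by omega); rw [tcv3] at hag3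
        have hag4 := hag 4 (by omega); rw [tcv4] at hag4
        have hag5 := hag 5 (by omega); rw [tcv5] at hag5
        have hag6 := hag 6 (by omega); rw [tcv6] at hag6
        have p1 : s 1 = s (1+1) := by show s 1 = s 2; rw [h1, h2]
        have p5 : s 5 = s (5+1) := by show s 5 = s 6; rw [hag5, hag6]
        have nopairE : ∀ k, s (2*k+0) ≠ s (2*k+0+1) := by
          intro k
          rcases Nat.eq_zero_or_pos k with rfl | hk
          · show s 0 ≠ s 1
            rw [h0, h1]; decide
          · intro hpair
            have hp2 : s (2*k) = s (2*k+1) := hpair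
            have := pair_parity hs (2*k-1) 1 (2*k) (by omega) (by omega) rfl p1 hp2
            omega
        have hOF2 := ofp_sub hs 0 nopairE
        rcases Nat.even_or_odd n with ⟨m, hm⟩ | ⟨m, hm⟩
        · have hGt := (IH m (by omega)).1
          refine hGt (fun k => s (2*k+0)) hOF2 ?_ ?_ ?_ ?_ ?_ ?_
          · show s (2*0+0) = 1
            exact h0
          · show s (2*1+0) = 0
            exact h2
          · show s (2*2+0) = 0
            exact hag4
          · intro i0 hi0
            show s (2*i0+0) = tc i0
            rw [show 2*i0+0 = 2*i0 from rfl, hag (2*i0) (by omega), tc_even]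
          · show s (2*m+0) = 0
            rw [show 2*m+0 = n from by omega]
            exact hn
          · rw [← tc_even m, show 2*m = n from by omega]
            exact htc
        · -- n = 2m+1 : parity contradiction
          have e1 := f2_ne _ _ (nopairE m)
          have h4 := hag (2*m) (by omega)
          have : s n = tc n := by
            rw [show n = 2*m+1 from by omega, show 2*m+1 = 2*m+0+1 from rfl, e1,
              show 2*m+0 = 2*m from rfl, h4, tc_odd, tc_even]
          rw [this, htc] at hn
          exact absurd hn (by decide)
    · -- Gw
      intro z hz h0 h1 h2 h3 hag hn htc
      rcases Nat.lt_or_ge n 8 with hn8 | hn8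
      · interval_cases n
        · rw [h0] at hn; exact absurd hn (by decide)
        · rw [h1] at hn; exact absurd hn (by decide)
        · rw [wwv2] at htc; exact absurd htc (by decide)
        · rw [wwv3] at htc; exact absurd htc (by decide)
        · refine hz 2 1 (by omega) ?_
          intro m hm1 hm2
          rcases (show m = 2 ∨ m = 3 by omega) with rfl | rfl
          · show z 2 = z 3
            rw [h2, h3]
          · show z 3 = z 4
            rw [h3, hn]
        · rw [wwv5] at htc; exact absurd htc (by decide)
        · -- n = 6 : pairs at 2 and 5
          have hag5 := hag 5 (by omega); rw [wwv5] at hag5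
          have p2 : z 2 = z (2+1) := by show z 2 = z 3; rw [h2, h3]
          have p5 : z 5 = z (5+1) := by show z 5 = z 6; rw [hag5, hn]
          have := pair_parity hz 3 2 5 (by omega) (by omega) rfl p2 p5
          omega
        · -- n = 7
          have hag4 := hag 4 (by omega); rw [wwv4] at hag4
          have hag5 := hag 5 (by omega); rw [wwv5] at hag5
          have hag6 := hag 6 (by omega); rw [wwv6] at hag6
          rcases f2_cases (z 8) with h8 | h8
          · have p2 : z 2 = z (2+1) := by show z 2 = z 3; rw [h2, h3]
            have p7 : z 7 = z (7+1) := by show z 7 = z 8; rw [hn, h8]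
            have := pair_parity hz 5 2 7 (by omega) (by omega) rfl p2 p7
            omega
          · refine hz 4 2 (by omega) ?_
            intro m hm1 hm2
            rcases (show m = 4 ∨ m = 5 ∨ m = 6 by omega) with rfl | rfl | rfl
            · show z 4 = z 6
              rw [hag4, hag6]
            · show z 5 = z 7
              rw [hag5, hn]
            · show z 6 = z 8
              rw [hag6, h8]
      · -- n ≥ 8 : parse odd positions
        have hag4 := hag 4 (by omega); rw [wwv4] at hag4
        have hag5 := hag 5 (by omega); rw [wwv5] at hag5
        have hag6 := hag 6 (by omega); rw [wwv6] at hag6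
        have hag7 := hag 7 (by omega); rw [wwv7] at hag7
        have p2 : z 2 = z (2+1) := by show z 2 = z 3; rw [h2, h3]
        have p6 : z 6 = z (6+1) := by show z 6 = z 7; rw [hag6, hag7]
        have nopairO : ∀ k, z (2*k+1) ≠ z (2*k+1+1) := by
          intro k
          rcases Nat.eq_zero_or_pos k with rfl | hk
          · intro hpair
            have hp2 : z 1 = z (1+1) := hpair
            have := pair_parity hz 1 1 2 (by omega) (by omega) rfl hp2 p2
            omega
          · intro hpair
            have hp2 : z (2*k+1) = z (2*k+1+1) := hpair
            have := pair_parity hz (2*k-1) 2 (2*k+1) (by omega) (by omega) rfl p2 hp2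
            omega
        have hOF2 := ofp_sub hz 1 nopairO
        rcases Nat.even_or_odd n with ⟨m, hm⟩ | ⟨m, hm⟩
        · -- n = 2m even : direct contradiction
          have e1 := f2_ne _ _ (nopairO (m-1))
          have h4 := hag (2*(m-1)+1) (by omega)
          have hzn : z n = 1 - tc (m-1) := by
            rw [show n = 2*(m-1)+1+1 from by omega, e1, h4, ww_odd]
          have hwn : ww n = 1 - tc (m-1) := by
            rw [show n = 2*(m-1)+2 from by omega, ww_even2]
          rw [hzn] at hn
          rw [hwn] at htc
          rw [htc] at hn
          exact absurd hn (by decide)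
        · -- n = 2m+1 : recurse Gt m
          have hGt := (IH m (by omega)).1
          refine hGt (fun k => z (2*k+1)) hOF2 ?_ ?_ ?_ ?_ ?_ ?_
          · show z (2*0+1) = 1
            exact h1
          · show z (2*1+1) = 0
            exact h3
          · show z (2*2+1) = 0
            exact hag5
          · intro i0 hi0
            show z (2*i0+1) = tc i0
            rw [hag (2*i0+1) (by omega), ww_odd]
          · show z (2*m+1) = 0
            rw [show 2*m+1 = n from by omega]
            exact hn
          · rw [← ww_odd m, show 2*m+1 = n from by omega]
            exact htc
    · -- Gv
      intro y hy h0 h1 h2 hag hn htc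
      rcases Nat.lt_or_ge n 8 with hn8 | hn8
      · interval_cases n
        · rw [h0] at hn; exact absurd hn (by decide)
        · rw [vvv1] at htc; exact absurd htc (by decide)
        · rw [h2] at hn; exact absurd hn (by decide)
        · rw [vvv3] at htc; exact absurd htc (by decide)
        · rw [vvv4] at htc; exact absurd htc (by decide)
        · have hag3 := hag 3 (by omega); rw [vvv3] at hag3
          have hag4 := hag 4 (by omega); rw [vvv4] at hag4
          refine hy 3 1 (by omega) ?_
          intro m hm1 hm2
          rcases (show m = 3 ∨ m = 4 by omega) with rfl | rfl
          · show y 3 = y 4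
            rw [hag3, hag4]
          · show y 4 = y 5
            rw [hag4, hn]
        · rw [vvv6] at htc; exact absurd htc (by decide)
        · have hag3 := hag 3 (by omega); rw [vvv3] at hag3
          have hag4 := hag 4 (by omega); rw [vvv4] at hag4
          have hag5 := hag 5 (by omega); rw [vvv5] at hag5
          have hag6 := hag 6 (by omega); rw [vvv6] at hag6
          refine hy 1 3 (by omega) ?_
          intro m hm1 hm2
          rcases (show m = 1 ∨ m = 2 ∨ m = 3 ∨ m = 4 by omega) with rfl | rfl | rfl | rfl
          · show y 1 = y 4
            rw [h1, hag4]
          · show y 2 = y 5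
            rw [h2, hag5]
          · show y 3 = y 6
            rw [hag3, hag6]
          · show y 4 = y 7
            rw [hag4, hn]
      · have hag3 := hag 3 (by omega); rw [vvv3] at hag3
        have hag4 := hag 4 (by omega); rw [vvv4] at hag4
        have hag6 := hag 6 (by omega); rw [vvv6] at hag6
        have p3 : y 3 = y (3+1) := by show y 3 = y 4; rw [hag3, hag4]
        have nopairE : ∀ k, y (2*k+0) ≠ y (2*k+0+1) := by
          intro k
          rcases Nat.lt_or_ge k 2 with hk | hk
          · interval_cases k
            · show y 0 ≠ y 1
              rw [h0, h1]; decide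
            · intro hpair
              have hp2 : y 2 = y (2+1) := hpair
              have := pair_parity hy 1 2 3 (by omega) (by omega) rfl hp2 p3
              omega
          · intro hpair
            have hp2 : y (2*k) = y (2*k+1) := hpair
            have := pair_parity hy (2*k-3) 3 (2*k) (by omega) (by omega) rfl p3 hp2
            omega
        have hOF2 := ofp_sub hy 0 nopairE
        rcases Nat.even_or_odd n with ⟨m, hm⟩ | ⟨m, hm⟩
        · have hGw := (IH m (by omega)).2.1
          refine hGw (fun k => y (2*k+0)) hOF2 ?_ ?_ ?_ ?_ ?_ ?_ ?_
          · show y (2*0+0) = 1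
            exact h0
          · show y (2*1+0) = 1
            exact h2
          · show y (2*2+0) = 0
            exact hag4
          · show y (2*3+0) = 0
            exact hag6
          · intro i0 hi0
            show y (2*i0+0) = ww i0
            rw [show 2*i0+0 = 2*i0 from rfl, hag (2*i0) (by omega), vv_even]
          · show y (2*m+0) = 0
            rw [show 2*m+0 = n from by omega]
            exact hn
          · rw [show n = 2*m from by omega, vv_even] at htc
            exact htc
        · have e1 := f2_ne _ _ (nopairE m)
          have h4 := hag (2*m) (by omega)
          have hyn : y n = 1 - ww m := by
            rw [show n = 2*m+0+1 from by omega, e1, show 2*m+0 = 2*m from rfl, h4, vv_even]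
          have hvn : vv n = 1 - ww m := by
            rw [show n = 2*m+1 from by omega, vv_odd]
          rw [hyn] at hn
          rw [hvn] at htc
          rw [htc] at hn
          exact absurd hn (by decide)
    · -- Gu
      intro x hx hag hn htc
      rcases Nat.lt_or_ge n 7 with hn7 | hn7
      · interval_cases n
        · rw [uuv0] at htc; exact absurd htc (by decide)
        · rw [uuv1] at htc; exact absurd htc (by decide)
        · have hag0 := hag 0 (by omega); rw [uuv0] at hag0
          have hag1 := hag 1 (by omega); rw [uuv1] at hag1
          refine hx 0 1 (by omega) ?_
          intro m hm1 hm2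
          rcases (show m = 0 ∨ m = 1 by omega) with rfl | rfl
          · show x 0 = x 1
            rw [hag0, hag1]
          · show x 1 = x 2
            rw [hag1, hn]
        · rw [uuv3] at htc; exact absurd htc (by decide)
        · rw [uuv4] at htc; exact absurd htc (by decide)
        · have hag3 := hag 3 (by omega); rw [uuv3] at hag3
          have hag4 := hag 4 (by omega); rw [uuv4] at hag4
          refine hx 3 1 (by omega) ?_
          intro m hm1 hm2
          rcases (show m = 3 ∨ m = 4 by omega) with rfl | rfl
          · show x 3 = x 4
            rw [hag3, hag4]
          · show x 4 = x 5
            rw [hag4, hn]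
        · have hag0 := hag 0 (by omega); rw [uuv0] at hag0
          have hag1 := hag 1 (by omega); rw [uuv1] at hag1
          have hag2 := hag 2 (by omega); rw [uuv2] at hag2
          have hag3 := hag 3 (by omega); rw [uuv3] at hag3
          have hag4 := hag 4 (by omega); rw [uuv4] at hag4
          have hag5 := hag 5 (by omega); rw [uuv5] at hag5
          refine hx 0 3 (by omega) ?_
          intro m hm1 hm2
          rcases (show m = 0 ∨ m = 1 ∨ m = 2 ∨ m = 3 by omega) with rfl | rfl | rfl | rfl
          · show x 0 = x 3
            rw [hag0, hag3]
          · show x 1 = x 4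
            rw [hag1, hag4]
          · show x 2 = x 5
            rw [hag2, hag5]
          · show x 3 = x 6
            rw [hag3, hn]
      · have hag2 := hag 2 (by omega); rw [uuv2] at hag2
        have hag3 := hag 3 (by omega); rw [uuv3] at hag3
        have hag4 := hag 4 (by omega); rw [uuv4] at hag4
        have hag5 := hag 5 (by omega); rw [uuv5] at hag5
        have hag6 := hag 6 (by omega); rw [uuv6] at hag6
        have p3 : x 3 = x (3+1) := by show x 3 = x 4; rw [hag3, hag4]
        have nopairE : ∀ k, x (2*k+2) ≠ x (2*k+2+1) := by
          intro k
          rcases Nat.eq_zero_or_pos k with rfl | hk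
          · intro hpair
            have hp2 : x 2 = x (2+1) := hpair
            have := pair_parity hx 1 2 3 (by omega) (by omega) rfl hp2 p3
            omega
          · intro hpair
            have hp2 : x (2*k+2) = x (2*k+2+1) := hpair
            have := pair_parity hx (2*k-1) 3 (2*k+2) (by omega) (by omega) rfl p3 hp2
            omega
        have hOF2 := ofp_sub hx 2 nopairE
        rcases Nat.even_or_odd n with ⟨m, hm⟩ | ⟨m, hm⟩
        · have hGv := (IH (m-1) (by omega)).2.2.1
          refine hGv (fun k => x (2*k+2)) hOF2 ?_ ?_ ?_ ?_ ?_ ?_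
          · show x (2*0+2) = 1
            exact hag2
          · show x (2*1+2) = 0
            exact hag4
          · show x (2*2+2) = 1
            exact hag6
          · intro i0 hi0
            show x (2*i0+2) = vv i0
            rw [hag (2*i0+2) (by omega), uu_even2]
          · show x (2*(m-1)+2) = 0
            rw [show 2*(m-1)+2 = n from by omega]
            exact hn
          · rw [← uu_even2 (m-1), show 2*(m-1)+2 = n from by omega]
            exact htc
        · have e1 := f2_ne _ _ (nopairE (m-1))
          have h4 := hag (2*(m-1)+2) (by omega)
          have hxn : x n = 1 - uu (2*(m-1)+2) := by
            rw [show n = 2*(m-1)+2+1 from by omega, e1, h4]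
          have hun : uu n = 1 - uu (2*(m-1)+2) := by
            rw [show n = 2*(m-1)+3 from by omega, uu_odd3]
          rw [hxn] at hn
          rw [hun] at htc
          rw [htc] at hn
          exact absurd hn (by decide)
theorem lexicographically_least_overlapFree :
    OverlapFree (prepend [0, 0, 1, 0, 0, 1] (fun n => 1 - thueMorse n)) ∧
    ∀ x : ℕ → Fin 2, OverlapFree x →
      x = prepend [0, 0, 1, 0, 0, 1] (fun n => 1 - thueMorse n) ∨
      LexLt (prepend [0, 0, 1, 0, 0, 1] (fun n => 1 - thueMorse n)) x := by
  constructor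
  · show OverlapFree uu
    intro w hfac hov
    obtain ⟨i, q, hq, HP⟩ := per_of_factor_overlap hfac hov
    exact ofp_uu i q hq HP
  · intro x hx
    by_cases he : x = uu
    · left
      exact he
    · right
      have hOF : OFp x := ofp_of_overlapFree hx
      have hne : ∃ n, x n ≠ uu n := by
        by_contra h
        push_neg at h
        exact he (funext h)
      classical
      let n := Nat.find hne
      have hnd : x n ≠ uu n := Nat.find_spec hne
      have hag : ∀ i, i < n → x i = uu i := fun i hi => not_not.mp (Nat.find_min hne hi)
      rcases f2_cases (x n) with hx0 | hx1
      · have hu1 : uu n = 1 := by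
          rcases f2_cases (uu n) with h | h
          · exact absurd (hx0.trans h.symm) hnd
          · exact h
        exact ((Gall n).2.2.2 x hOF hag hx0 hu1).elim
      · have hu0 : uu n = 0 := by
          rcases f2_cases (uu n) with h | h
          · exact h
          · exact absurd (hx1.trans h.symm) hnd
        exact ⟨n, fun i hi => (hag i hi).symm, hu0, hx1⟩
end

section
/- Let t be a nonempty finite binary word and k ≥ 1 an integer, and let w be the infinite binary word w = t · μ^k(t) · μ^{2k}(t) · μ^{3k}(t) ⋯ (the concatenation of the words μ^{jk}(t) for j = 0, 1, 2, …). Then the 2-kernel of w, i.e. the set of sequences { n ↦ w(2^e·n + i) : e ≥ 0, 0 ≤ i < 2^e }, is finite; equivalently, w is 2-automatic. -/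
/-- The Thue--Morse morphism on finite words. -/
def muWord (w : List (Fin 2)) : List (Fin 2) :=
  w.flatMap (fun a => [a, 1 - a])

/-- The 2-kernel of an infinite word. -/
def Kernel2 (x : ℕ → Fin 2) : Set (ℕ → Fin 2) :=
  {y | ∃ e i : ℕ, i < 2 ^ e ∧ y = fun n => x (2 ^ e * n + i)}

/-- The finite word `t ++ μ^k(t) ++ μ^{2k}(t) ++ ⋯ ++ μ^{jk}(t)`. -/
def partialConcat (t : List (Fin 2)) (k : ℕ) : ℕ → List (Fin 2)
  | 0 => t
  | j + 1 => partialConcat t k j ++ muWord^[(j + 1) * k] t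

/-- The infinite word `t · μ^k(t) · μ^{2k}(t) · μ^{3k}(t) ⋯` (for `t` nonempty,
position `n` lies within the prefix `partialConcat t k n`). -/
def concatWord (t : List (Fin 2)) (k : ℕ) : ℕ → Fin 2 :=
  fun n => (partialConcat t k n).getD n 0

namespace TMAux

lemma muWord_append (a b : List (Fin 2)) : muWord (a ++ b) = muWord a ++ muWord b := by
  simp [muWord]

lemma muWord_iter_append (e : ℕ) (a b : List (Fin 2)) :
    muWord^[e] (a ++ b) = muWord^[e] a ++ muWord^[e] b := by
  induction e generalizing a b with
  | zero => rfl
  | succ e ih =>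
    rw [Function.iterate_succ_apply, Function.iterate_succ_apply, Function.iterate_succ_apply,
      muWord_append, ih]

lemma muWord_length (w : List (Fin 2)) : (muWord w).length = 2 * w.length := by
  induction w with
  | nil => rfl
  | cons a w ih => simp [muWord] at ih ⊢; omega

lemma muWord_iter_length (e : ℕ) (w : List (Fin 2)) :
    (muWord^[e] w).length = 2 ^ e * w.length := by
  induction e generalizing w with
  | zero => simp
  | succ e ih =>
    rw [Function.iterate_succ_apply, ih, muWord_length, pow_succ]
    ring

lemma partialConcat_succ (t : List (Fin 2)) (k j : ℕ) :
    partialConcat t k (j + 1) = t ++ muWord^[k] (partialConcat t k j) := by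
  induction j with
  | zero => simp [partialConcat, one_mul]
  | succ j ih =>
    show partialConcat t k (j + 1) ++ muWord^[(j + 2) * k] t =
      t ++ muWord^[k] (partialConcat t k j ++ muWord^[(j + 1) * k] t)
    rw [muWord_iter_append, ih, List.append_assoc]
    congr 2
    have h : (j + 2) * k = k + (j + 1) * k := by ring
    rw [h, Function.iterate_add_apply]

lemma length_pos (t : List (Fin 2)) (ht : t ≠ []) : 0 < t.length :=
  List.length_pos_iff.2 ht

lemma lt_length_partialConcat (t : List (Fin 2)) (ht : t ≠ []) (k : ℕ) :
    ∀ j, j < (partialConcat t k j).length := by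
  intro j
  induction j with
  | zero => exact length_pos t ht
  | succ j ih =>
    have h1 : 0 < (muWord^[(j + 1) * k] t).length := by
      rw [muWord_iter_length]
      exact Nat.mul_pos (Nat.pow_pos (by norm_num)) (length_pos t ht)
    show j + 1 < (partialConcat t k j ++ _).length
    rw [List.length_append]
    omega

lemma length_partialConcat_mono (t : List (Fin 2)) (k : ℕ) (j l : ℕ) :
    (partialConcat t k j).length ≤ (partialConcat t k (j + l)).length := by
  induction l with
  | zero => exact le_rfl
  | succ l ih =>
    show _ ≤ (partialConcat t k (j + l) ++ _).length
    rw [List.length_append]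
    omega

lemma getD_partialConcat_stable (t : List (Fin 2)) (k : ℕ) (l j n : ℕ)
    (h : n < (partialConcat t k j).length) :
    (partialConcat t k (j + l)).getD n 0 = (partialConcat t k j).getD n 0 := by
  induction l with
  | zero => rfl
  | succ l ih =>
    rw [show j + (l + 1) = (j + l) + 1 from rfl]
    show (partialConcat t k (j + l) ++ _).getD n 0 = _
    rw [List.getD_append _ _ _ _ (lt_of_lt_of_le h (length_partialConcat_mono t k j l)), ih]

lemma concatWord_eq_getD (t : List (Fin 2)) (ht : t ≠ []) (k : ℕ) (J n : ℕ)
    (h : n < (partialConcat t k J).length) :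
    concatWord t k n = (partialConcat t k J).getD n 0 := by
  unfold concatWord
  rcases le_total n J with hnJ | hnJ
  · have h2 := getD_partialConcat_stable t k (J - n) n n (lt_length_partialConcat t ht k n)
    rw [show n + (J - n) = J by omega] at h2
    exact h2.symm
  · have h2 := getD_partialConcat_stable t k (n - J) J n h
    rw [show J + (n - J) = n by omega] at h2
    exact h2

lemma prepend_lt (p : List (Fin 2)) (x : ℕ → Fin 2) (n : ℕ) (h : n < p.length) :
    prepend p x n = p.getD n 0 := by
  simp [prepend, h, List.getD_eq_getElem?_getD, List.getElem?_eq_getElem h]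

lemma prepend_ge (p : List (Fin 2)) (x : ℕ → Fin 2) (n : ℕ) (h : p.length ≤ n) :
    prepend p x n = x (n - p.length) := by
  simp [prepend, Nat.not_lt.2 h]

lemma muWord_getD (p : List (Fin 2)) (n : ℕ) (h : n < 2 * p.length) :
    (muWord p).getD n 0 =
      if n % 2 = 0 then p.getD (n / 2) 0 else 1 - p.getD (n / 2) 0 := by
  induction p generalizing n with
  | nil => simp at h
  | cons a p ih =>
    have hcons : muWord (a :: p) = a :: (1 - a) :: muWord p := by simp [muWord]
    rcases n with _ | n
    · simp [hcons]
    rcases n with _ | n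
    · simp [hcons]
    · have h' : n < 2 * p.length := by simp at h; omega
      have e1 : (n + 2) % 2 = n % 2 := by omega
      have e2 : (n + 2) / 2 = n / 2 + 1 := by omega
      rw [hcons, e1, e2]
      show (muWord p).getD n 0 = _
      rw [ih n h']
      rcases Nat.even_or_odd n with he | ho
      · have hp := Nat.even_iff.1 he
        rw [if_pos hp, if_pos hp, List.getD_cons_succ]
      · have hp : ¬ n % 2 = 0 := by have := Nat.odd_iff.1 ho; omega
        rw [if_neg hp, if_neg hp, List.getD_cons_succ]

lemma mu_prepend (p : List (Fin 2)) (x : ℕ → Fin 2) :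
    mu (prepend p x) = prepend (muWord p) (mu x) := by
  funext n
  by_cases h : n < 2 * p.length
  · have h2 : n / 2 < p.length := by omega
    have h3 : n < (muWord p).length := by rw [muWord_length]; exact h
    rw [mu, prepend_lt _ _ _ h2, prepend_lt _ _ _ h3, muWord_getD p n h]
  · push_neg at h
    have h2 : p.length ≤ n / 2 := by omega
    have h3 : (muWord p).length ≤ n := by rw [muWord_length]; exact h
    rw [mu, prepend_ge _ _ _ h2, prepend_ge _ _ _ h3, muWord_length, mu]
    have e1 : (n - 2 * p.length) % 2 = n % 2 := by omega
    have e2 : (n - 2 * p.length) / 2 = n / 2 - p.length := by omega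
    rw [e1, e2]

lemma mu_iter_prepend (e : ℕ) (p : List (Fin 2)) (x : ℕ → Fin 2) :
    mu^[e] (prepend p x) = prepend (muWord^[e] p) (mu^[e] x) := by
  induction e generalizing p x with
  | zero => rfl
  | succ e ih =>
    rw [Function.iterate_succ_apply, Function.iterate_succ_apply, Function.iterate_succ_apply,
      mu_prepend, ih]

/-- The parity word `Z e = mu^[e] 0`. -/
noncomputable def Z (e : ℕ) : ℕ → Fin 2 := mu^[e] (fun _ => 0)

lemma mu_iter_apply (e : ℕ) (x : ℕ → Fin 2) (n : ℕ) :
    mu^[e] x n = x (n / 2 ^ e) + Z e n := by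
  induction e generalizing n with
  | zero => simp [Z]
  | succ e ih =>
    have hz : Z (e + 1) n = mu (Z e) n := by
      rw [Z, Function.iterate_succ_apply', Z]
    have hdd : n / 2 / 2 ^ e = n / 2 ^ (e + 1) := by
      rw [Nat.div_div_eq_div_mul, pow_succ, mul_comm]
    rw [Function.iterate_succ_apply', mu, hz, mu, ih (n / 2), hdd]
    have key : ∀ a b : Fin 2, 1 - (a + b) = a + (1 - b) := by decide
    by_cases hpar : n % 2 = 0
    · rw [if_pos hpar, if_pos hpar]
    · rw [if_neg hpar, if_neg hpar, key]

lemma Z_mod (e : ℕ) (a : ℕ) : Z e a = Z e (a % 2 ^ e) := by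
  induction e generalizing a with
  | zero => rfl
  | succ e ih =>
    have hz : ∀ b, Z (e + 1) b = mu (Z e) b := fun b => by
      rw [Z, Function.iterate_succ_apply', Z]
    have e1 : a % 2 ^ (e + 1) % 2 = a % 2 := by
      apply Nat.mod_mod_of_dvd
      exact dvd_pow_self 2 (Nat.succ_ne_zero e)
    have e2 : a % 2 ^ (e + 1) / 2 = a / 2 % 2 ^ e := by
      rw [pow_succ, mul_comm, Nat.mod_mul_right_div_self]
    rw [hz, hz, mu, mu, e1, e2, ← ih (a / 2)]

lemma concatWord_fix (t : List (Fin 2)) (ht : t ≠ []) (k : ℕ) :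
    concatWord t k = prepend t (mu^[k] (concatWord t k)) := by
  set W := concatWord t k with hW
  set m := t.length with hm
  funext n
  by_cases hn : n < m
  · rw [prepend_lt _ _ _ hn]
    have h0 : n < (partialConcat t k 0).length := hn
    exact concatWord_eq_getD t ht k 0 n h0
  · push_neg at hn
    rw [prepend_ge _ _ _ hn]
    have hJ : n < (partialConcat t k n).length := lt_length_partialConcat t ht k n
    have hq : (n - m) / 2 ^ k < (partialConcat t k n).length :=
      lt_of_le_of_lt (le_trans (Nat.div_le_self _ _) (Nat.sub_le _ _)) hJ
    have h1 : W ((n - m) / 2 ^ k) = prepend (partialConcat t k n) (fun _ => 0) ((n - m) / 2 ^ k) := by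
      rw [prepend_lt _ _ _ hq]
      exact concatWord_eq_getD t ht k n _ hq
    have hlen : n - m < (muWord^[k] (partialConcat t k n)).length := by
      rw [muWord_iter_length]
      calc n - m ≤ n := Nat.sub_le _ _
        _ < (partialConcat t k n).length := hJ
        _ ≤ 2 ^ k * (partialConcat t k n).length :=
            Nat.le_mul_of_pos_left _ (Nat.pow_pos (by norm_num))
    have chain : mu^[k] W (n - m) = (muWord^[k] (partialConcat t k n)).getD (n - m) 0 := by
      rw [mu_iter_apply, h1, ← mu_iter_apply k (prepend (partialConcat t k n) (fun _ => 0)) (n - m),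
        mu_iter_prepend, prepend_lt _ _ _ hlen]
    rw [chain]
    have hJ1 : n < (partialConcat t k (n + 1)).length :=
      lt_trans (Nat.lt_succ_self n) (lt_length_partialConcat t ht k (n + 1))
    rw [show W n = (partialConcat t k (n + 1)).getD n 0 from concatWord_eq_getD t ht k (n + 1) n hJ1,
      partialConcat_succ, List.getD_append_right _ _ _ _ hn]

lemma W_rec (t : List (Fin 2)) (ht : t ≠ []) (k : ℕ) (N : ℕ) (hN : t.length ≤ N) :
    concatWord t k N =
      concatWord t k ((N - t.length) / 2 ^ k) + Z k ((N - t.length) % 2 ^ k) := by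
  conv_lhs => rw [concatWord_fix t ht k]
  rw [prepend_ge _ _ _ hN, mu_iter_apply, ← Z_mod]

/-- `concatWord` extended to `ℤ` by zero. -/
def Wz (t : List (Fin 2)) (k : ℕ) : ℤ → Fin 2 :=
  fun z => if 0 ≤ z then concatWord t k z.toNat else 0

lemma step (t : List (Fin 2)) (ht : t ≠ []) (k : ℕ) (hk : 1 ≤ k)
    (e : ℕ) (he : k ≤ e) (hbig : (2 * t.length + 2 ^ k : ℤ) ≤ 2 ^ e)
    (i : ℤ) (hi1 : -((t.length : ℤ) + 2 ^ k) ≤ i) (hi2 : i < 2 ^ e) (c : Fin 2) :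
    ∃ i' : ℤ, -((t.length : ℤ) + 2 ^ k) ≤ i' ∧ i' < 2 ^ (e - k) ∧ ∃ c' : Fin 2,
      ∀ n : ℕ, 1 ≤ n →
        c + Wz t k (2 ^ e * n + i) = c' + Wz t k (2 ^ (e - k) * n + i') := by
  have hm0 : (0 : ℤ) ≤ (t.length : ℤ) := Int.natCast_nonneg _
  have h2k : (0 : ℤ) < 2 ^ k := by positivity
  have h2k2 : (2 : ℤ) ≤ 2 ^ k := by
    calc (2 : ℤ) = 2 ^ 1 := (pow_one 2).symm
      _ ≤ 2 ^ k := pow_le_pow_right₀ (by norm_num) hk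
  set m : ℤ := (t.length : ℤ) with hmdef
  set q : ℤ := (i - m) / 2 ^ k with hqdef
  set r : ℤ := (i - m) % 2 ^ k with hrdef
  have hr0 : 0 ≤ r := Int.emod_nonneg _ (ne_of_gt h2k)
  have hr1 : r < 2 ^ k := Int.emod_lt_of_pos _ h2k
  have hqr : 2 ^ k * q + r = i - m := Int.mul_ediv_add_emod _ _
  have hsplit : (2 : ℤ) ^ e = 2 ^ k * 2 ^ (e - k) := by
    rw [← pow_add]; congr 1; omega
  refine ⟨q, ?_, ?_, c + Z k r.toNat, ?_⟩
  · rw [hqdef, Int.le_ediv_iff_mul_le h2k]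
    nlinarith [mul_le_mul_of_nonneg_left h2k2 (by linarith : (0:ℤ) ≤ m + 2 ^ k)]
  · rw [hqdef, Int.ediv_lt_iff_lt_mul h2k]
    nlinarith [hsplit]
  · intro n hn
    have hn1 : (1 : ℤ) ≤ (n : ℤ) := by exact_mod_cast hn
    have hN : m ≤ 2 ^ e * (n : ℤ) + i := by
      nlinarith [mul_le_mul_of_nonneg_left hn1 (by positivity : (0:ℤ) ≤ (2:ℤ) ^ e)]
    have hN0 : (0 : ℤ) ≤ 2 ^ e * (n : ℤ) + i := le_trans hm0 hN
    set N : ℕ := (2 ^ e * (n : ℤ) + i).toNat with hNdef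
    have hzN : (N : ℤ) = 2 ^ e * (n : ℤ) + i := Int.toNat_of_nonneg hN0
    have hmN : t.length ≤ N := by omega
    have hA : ((N - t.length : ℕ) : ℤ) = (2 ^ e * (n : ℤ) + i) - m := by
      rw [hmdef]; omega
    have hz2 : (2 ^ e * (n : ℤ) + i) - m = r + 2 ^ k * (2 ^ (e - k) * (n : ℤ) + q) := by
      linear_combination (n : ℤ) * hsplit - hqr
    have hDiv2 : ((2 ^ e * (n : ℤ) + i) - m) / 2 ^ k = 2 ^ (e - k) * (n : ℤ) + q := by
      rw [hz2, Int.add_mul_ediv_left _ _ (ne_of_gt h2k), Int.ediv_eq_zero_of_lt hr0 hr1, zero_add]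
    have hMod2 : ((2 ^ e * (n : ℤ) + i) - m) % 2 ^ k = r := by
      rw [hz2, Int.add_mul_emod_self_left, Int.emod_eq_of_lt hr0 hr1]
    have hdiv : (((N - t.length) / 2 ^ k : ℕ) : ℤ) = 2 ^ (e - k) * (n : ℤ) + q := by
      rw [Int.natCast_div, hA, ← hDiv2]
      norm_num
    have hmod : (((N - t.length) % 2 ^ k : ℕ) : ℤ) = r := by
      rw [Int.natCast_mod, hA, ← hMod2]
      norm_num
    have hmodN : ((N - t.length) % 2 ^ k : ℕ) = r.toNat := by omega
    have hWz1 : Wz t k (2 ^ e * (n : ℤ) + i) = concatWord t k N := by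
      unfold Wz
      rw [if_pos hN0]
    have hWz2 : Wz t k (2 ^ (e - k) * (n : ℤ) + q) = concatWord t k ((N - t.length) / 2 ^ k) := by
      rw [← hdiv]
      unfold Wz
      rw [if_pos (Int.natCast_nonneg _), Int.toNat_natCast]
    rw [hWz1, hWz2, W_rec t ht k N hmN, hmodN]
    abel

lemma reduce (t : List (Fin 2)) (ht : t ≠ []) (k : ℕ) (hk : 1 ≤ k) :
    ∀ e : ℕ, ∀ i : ℤ, -((t.length : ℤ) + 2 ^ k) ≤ i → i < 2 ^ e → ∀ c : Fin 2,
    ∃ e' : ℕ, ∃ i' : ℤ, ∃ c' : Fin 2, e' < k + 2 * t.length + 2 ^ k ∧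
      -((t.length : ℤ) + 2 ^ k) ≤ i' ∧ i' < 2 ^ e' ∧
      ∀ n : ℕ, 1 ≤ n → c + Wz t k (2 ^ e * n + i) = c' + Wz t k (2 ^ e' * n + i') := by
  intro e
  induction e using Nat.strong_induction_on with
  | _ e IH =>
    intro i hi1 hi2 c
    by_cases hE : e < k + 2 * t.length + 2 ^ k
    · exact ⟨e, i, c, hE, hi1, hi2, fun n _ => rfl⟩
    · push_neg at hE
      have h1k : 1 ≤ 2 ^ k := Nat.one_le_two_pow
      have he : k ≤ e := by omega
      have hbig : (2 * t.length + 2 ^ k : ℤ) ≤ 2 ^ e := by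
        have h1 : 2 * t.length + 2 ^ k < 2 ^ e := lt_of_le_of_lt (by omega) (Nat.lt_two_pow_self (n := e))
        have h2 : ((2 * t.length + 2 ^ k : ℕ) : ℤ) ≤ ((2 ^ e : ℕ) : ℤ) := by
          exact_mod_cast le_of_lt h1
        push_cast at h2
        linarith
      obtain ⟨i', hi'1, hi'2, c', hstep⟩ := step t ht k hk e he hbig i hi1 hi2 c
      obtain ⟨e'', i'', c'', hlt, ha, hb, hid⟩ := IH (e - k) (by omega) i' hi'1 hi'2 c'
      exact ⟨e'', i'', c'', hlt, ha, hb, fun n hn => (hstep n hn).trans (hid n hn)⟩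

end TMAux

theorem kernel2_finite_of_concat (t : List (Fin 2)) (ht : t ≠ []) (k : ℕ) (hk : 1 ≤ k) :
    (Kernel2 (concatWord t k)).Finite := by
  classical
  set K : ℕ := k + 2 * t.length + 2 ^ k with hK
  set B : ℤ := (t.length : ℤ) + 2 ^ k with hB
  set F : ℕ × ℤ × Fin 2 × Fin 2 → (ℕ → Fin 2) := fun p => fun n =>
    if n = 0 then p.2.2.2 else p.2.2.1 + TMAux.Wz t k (2 ^ p.1 * n + p.2.1) with hF
  have hP : ((Set.Iio K) ×ˢ (Set.Icc (-B) (2 ^ K)) ×ˢ (Set.univ : Set (Fin 2)) ×ˢ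
      (Set.univ : Set (Fin 2))).Finite :=
    (Set.finite_Iio K).prod ((Set.finite_Icc _ _).prod (Set.finite_univ.prod Set.finite_univ))
  apply Set.Finite.subset (hP.image F)
  rintro y ⟨e, i, hi, rfl⟩
  have hi2 : (i : ℤ) < 2 ^ e := by exact_mod_cast hi
  have hi1 : -B ≤ (i : ℤ) := by
    have : (0 : ℤ) ≤ B := by rw [hB]; positivity
    have h0 : (0 : ℤ) ≤ (i : ℤ) := Int.natCast_nonneg _
    linarith
  obtain ⟨e', i', c', hlt, ha, hb, hid⟩ := TMAux.reduce t ht k hk e i hi1 hi2 0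
  refine ⟨(e', i', c', concatWord t k i), ⟨hlt, ⟨⟨ha, ?_⟩, trivial, trivial⟩⟩, ?_⟩
  · exact le_of_lt (lt_of_lt_of_le hb (pow_le_pow_right₀ (by norm_num) (le_of_lt hlt)))
  · funext n
    rcases Nat.eq_zero_or_pos n with rfl | hn
    · simp [hF]
    · have hne : n ≠ 0 := Nat.pos_iff_ne_zero.1 hn
      have hcast : ((2 ^ e * n + i : ℕ) : ℤ) = 2 ^ e * (n : ℤ) + (i : ℤ) := by push_cast; ring
      have h1 : concatWord t k (2 ^ e * n + i) = TMAux.Wz t k (2 ^ e * (n : ℤ) + (i : ℤ)) := by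
        rw [← hcast]
        unfold TMAux.Wz
        rw [if_pos (Int.natCast_nonneg _), Int.toNat_natCast]
      have h2 := hid n hn
      rw [zero_add] at h2
      simp only [hF, if_neg hne]
      rw [h1, h2]
end
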